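/- (Hopf bifurcation condition.) Let γ* = 5/6 + √721/42 and let (X₀, Y₀) be the equilibrium point of the planar tilt system, X₀ = −√6(3γ−4)/(2(3−γ)), Y₀ = 5(3γ−4)(3−2γ)/(2(3−γ)²). At γ = γ*, the Jacobian matrix of the planar vector field at (X₀, Y₀) has trace 0 and determinant (45√721 − 1205)/36, which is positive; hence its eigenvalues are the purely imaginary pair ±(i/6)√(45√721 − 1205). -/

import Mathlib

noncomputable section

namespace CFTilt

/-- the function `T(X,Y)` on the Collinson-French background. -/
def Tpl (γ X Y : ℝ) : ℝ :=
  (((3*γ - 4) - (Real.sqrt 6/3)*(γ-1)*X) * (1 - X^2 - Y) + (2/3)*(2-γ)*X^2)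
    / (1 - (γ-1)*(X^2 + Y))

/-- right-hand side of `X' = (T - 2/3)X - (2√6/3)Y`. -/
def FX (γ X Y : ℝ) : ℝ := (Tpl γ X Y - 2/3)*X - (2*Real.sqrt 6/3)*Y

/-- right-hand side of `Y' = 2(T + (2√6/3)X)Y`. -/
def FY (γ X Y : ℝ) : ℝ := 2*(Tpl γ X Y + (2*Real.sqrt 6/3)*X)*Y

set_option maxHeartbeats 2000000 in
theorem hopf_bifurcation_condition :
    let γs : ℝ := 5/6 + Real.sqrt 721/42
    let X0 : ℝ := -Real.sqrt 6*(3*γs-4)/(2*(3-γs))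
    let Y0 : ℝ := 5*(3*γs-4)*(3-2*γs)/(2*(3-γs)^2)
    let J11 : ℝ := deriv (fun x => FX γs x Y0) X0
    let J12 : ℝ := deriv (fun y => FX γs X0 y) Y0
    let J21 : ℝ := deriv (fun x => FY γs x Y0) X0
    let J22 : ℝ := deriv (fun y => FY γs X0 y) Y0
    let μ : ℂ := (Complex.I/6) * ((Real.sqrt (45*Real.sqrt 721 - 1205) : ℝ) : ℂ)
    J11 + J22 = 0 ∧
    J11*J22 - J12*J21 = (45*Real.sqrt 721 - 1205)/36 ∧
    0 < (45*Real.sqrt 721 - 1205)/36 ∧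
    (∃ v : Fin 2 → ℂ, v ≠ 0 ∧
      (!![(J11 : ℂ), (J12 : ℂ); (J21 : ℂ), (J22 : ℂ)]).mulVec v = μ • v) ∧
    (∃ v : Fin 2 → ℂ, v ≠ 0 ∧
      (!![(J11 : ℂ), (J12 : ℂ); (J21 : ℂ), (J22 : ℂ)]).mulVec v = (-μ) • v) := by
  intro γs X0 Y0 J11 J12 J21 J22 μ
  have ha : Real.sqrt 6 ^ 2 = 6 := Real.sq_sqrt (by norm_num)
  have hb : Real.sqrt 721 ^ 2 = 721 := Real.sq_sqrt (by norm_num)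
  have ha0 : (0:ℝ) < Real.sqrt 6 := Real.sqrt_pos.mpr (by norm_num)
  have hb0 : (0:ℝ) < Real.sqrt 721 := Real.sqrt_pos.mpr (by norm_num)
  have hb26 : (26:ℝ) < Real.sqrt 721 := by nlinarith
  have hb27 : Real.sqrt 721 < 27 := by nlinarith
  have hγ : γs = 5/6 + Real.sqrt 721/42 := rfl
  have hX0 : X0 = Real.sqrt 6*(17-Real.sqrt 721)/72 := by
    show -Real.sqrt 6*(3*γs-4)/(2*(3-γs)) = _
    rw [hγ, div_eq_div_iff (by nlinarith) (by norm_num : (72:ℝ) ≠ 0)]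
    linear_combination (-(Real.sqrt 6/21)) * hb
  have hY0 : Y0 = (-607 + 23*Real.sqrt 721)/432 := by
    show 5*(3*γs-4)*(3-2*γs)/(2*(3-γs)^2) = _
    rw [hγ, div_eq_div_iff (by nlinarith) (by norm_num : (432:ℝ) ≠ 0)]
    linear_combination (-(241/126) - (23/882)*Real.sqrt 721) * hb
  have hden : 1 - (γs-1)*(X0^2+Y0) = 13/18 + Real.sqrt 721/126 := by
    rw [hγ, hX0, hY0]
    linear_combination (289/31104 - (527/217728)*Real.sqrt 721 + (41/217728)*Real.sqrt 721^2
        - (1/217728)*Real.sqrt 721^3) * ha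
      + (-(5/36288) - (1/36288)*Real.sqrt 721) * hb
  have hdne : 1 - (γs-1)*(X0^2+Y0) ≠ 0 := by
    rw [hden]; positivity
  -- derivatives via HasDerivAt combinators
  have hTX := ((((hasDerivAt_id' X0).const_mul (Real.sqrt 6/3*(γs-1))).const_sub (3*γs-4)).mul
      (((hasDerivAt_pow 2 X0).const_sub 1).sub_const Y0)).add
      ((hasDerivAt_pow 2 X0).const_mul (2/3*(2-γs))) |>.div
      ((((hasDerivAt_pow 2 X0).add_const Y0).const_mul (γs-1)).const_sub 1) hdne
  have hTY := (((hasDerivAt_id' Y0).const_sub (1 - X0^2)).const_mul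
      (3*γs - 4 - Real.sqrt 6/3*(γs-1)*X0)).add_const (2/3*(2-γs)*X0^2) |>.div
      ((((hasDerivAt_id' Y0).const_add (X0^2)).const_mul (γs-1)).const_sub 1) hdne
  have p6_3 : Real.sqrt 6^3 = (6 : ℝ)*Real.sqrt 6 := by linear_combination ((1 : ℝ)*Real.sqrt 6^1) * ha
  have p6_4 : Real.sqrt 6^4 = (36 : ℝ) := by linear_combination ((6 : ℝ)*Real.sqrt 6^0 + (1 : ℝ)*Real.sqrt 6^2) * ha
  have p6_5 : Real.sqrt 6^5 = (36 : ℝ)*Real.sqrt 6 := by linear_combination ((6 : ℝ)*Real.sqrt 6^1 + (1 : ℝ)*Real.sqrt 6^3) * ha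
  have p6_6 : Real.sqrt 6^6 = (216 : ℝ) := by linear_combination ((36 : ℝ)*Real.sqrt 6^0 + (6 : ℝ)*Real.sqrt 6^2 + (1 : ℝ)*Real.sqrt 6^4) * ha
  have p6_7 : Real.sqrt 6^7 = (216 : ℝ)*Real.sqrt 6 := by linear_combination ((36 : ℝ)*Real.sqrt 6^1 + (6 : ℝ)*Real.sqrt 6^3 + (1 : ℝ)*Real.sqrt 6^5) * ha
  have p6_8 : Real.sqrt 6^8 = (1296 : ℝ) := by linear_combination ((216 : ℝ)*Real.sqrt 6^0 + (36 : ℝ)*Real.sqrt 6^2 + (6 : ℝ)*Real.sqrt 6^4 + (1 : ℝ)*Real.sqrt 6^6) * ha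
  have p6_9 : Real.sqrt 6^9 = (1296 : ℝ)*Real.sqrt 6 := by linear_combination ((216 : ℝ)*Real.sqrt 6^1 + (36 : ℝ)*Real.sqrt 6^3 + (6 : ℝ)*Real.sqrt 6^5 + (1 : ℝ)*Real.sqrt 6^7) * ha
  have p6_10 : Real.sqrt 6^10 = (7776 : ℝ) := by linear_combination ((1296 : ℝ)*Real.sqrt 6^0 + (216 : ℝ)*Real.sqrt 6^2 + (36 : ℝ)*Real.sqrt 6^4 + (6 : ℝ)*Real.sqrt 6^6 + (1 : ℝ)*Real.sqrt 6^8) * ha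
  have p6_11 : Real.sqrt 6^11 = (7776 : ℝ)*Real.sqrt 6 := by linear_combination ((1296 : ℝ)*Real.sqrt 6^1 + (216 : ℝ)*Real.sqrt 6^3 + (36 : ℝ)*Real.sqrt 6^5 + (6 : ℝ)*Real.sqrt 6^7 + (1 : ℝ)*Real.sqrt 6^9) * ha
  have p6_12 : Real.sqrt 6^12 = (46656 : ℝ) := by linear_combination ((7776 : ℝ)*Real.sqrt 6^0 + (1296 : ℝ)*Real.sqrt 6^2 + (216 : ℝ)*Real.sqrt 6^4 + (36 : ℝ)*Real.sqrt 6^6 + (6 : ℝ)*Real.sqrt 6^8 + (1 : ℝ)*Real.sqrt 6^10) * ha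
  have p6_13 : Real.sqrt 6^13 = (46656 : ℝ)*Real.sqrt 6 := by linear_combination ((7776 : ℝ)*Real.sqrt 6^1 + (1296 : ℝ)*Real.sqrt 6^3 + (216 : ℝ)*Real.sqrt 6^5 + (36 : ℝ)*Real.sqrt 6^7 + (6 : ℝ)*Real.sqrt 6^9 + (1 : ℝ)*Real.sqrt 6^11) * ha
  have p6_14 : Real.sqrt 6^14 = (279936 : ℝ) := by linear_combination ((46656 : ℝ)*Real.sqrt 6^0 + (7776 : ℝ)*Real.sqrt 6^2 + (1296 : ℝ)*Real.sqrt 6^4 + (216 : ℝ)*Real.sqrt 6^6 + (36 : ℝ)*Real.sqrt 6^8 + (6 : ℝ)*Real.sqrt 6^10 + (1 : ℝ)*Real.sqrt 6^12) * ha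
  have p6_15 : Real.sqrt 6^15 = (279936 : ℝ)*Real.sqrt 6 := by linear_combination ((46656 : ℝ)*Real.sqrt 6^1 + (7776 : ℝ)*Real.sqrt 6^3 + (1296 : ℝ)*Real.sqrt 6^5 + (216 : ℝ)*Real.sqrt 6^7 + (36 : ℝ)*Real.sqrt 6^9 + (6 : ℝ)*Real.sqrt 6^11 + (1 : ℝ)*Real.sqrt 6^13) * ha
  have p6_16 : Real.sqrt 6^16 = (1679616 : ℝ) := by linear_combination ((279936 : ℝ)*Real.sqrt 6^0 + (46656 : ℝ)*Real.sqrt 6^2 + (7776 : ℝ)*Real.sqrt 6^4 + (1296 : ℝ)*Real.sqrt 6^6 + (216 : ℝ)*Real.sqrt 6^8 + (36 : ℝ)*Real.sqrt 6^10 + (6 : ℝ)*Real.sqrt 6^12 + (1 : ℝ)*Real.sqrt 6^14) * ha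
  have p7_3 : Real.sqrt 721^3 = (721 : ℝ)*Real.sqrt 721 := by linear_combination ((1 : ℝ)*Real.sqrt 721^1) * hb
  have p7_4 : Real.sqrt 721^4 = (519841 : ℝ) := by linear_combination ((721 : ℝ)*Real.sqrt 721^0 + (1 : ℝ)*Real.sqrt 721^2) * hb
  have p7_5 : Real.sqrt 721^5 = (519841 : ℝ)*Real.sqrt 721 := by linear_combination ((721 : ℝ)*Real.sqrt 721^1 + (1 : ℝ)*Real.sqrt 721^3) * hb
  have p7_6 : Real.sqrt 721^6 = (374805361 : ℝ) := by linear_combination ((519841 : ℝ)*Real.sqrt 721^0 + (721 : ℝ)*Real.sqrt 721^2 + (1 : ℝ)*Real.sqrt 721^4) * hb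
  have p7_7 : Real.sqrt 721^7 = (374805361 : ℝ)*Real.sqrt 721 := by linear_combination ((519841 : ℝ)*Real.sqrt 721^1 + (721 : ℝ)*Real.sqrt 721^3 + (1 : ℝ)*Real.sqrt 721^5) * hb
  have p7_8 : Real.sqrt 721^8 = (270234665281 : ℝ) := by linear_combination ((374805361 : ℝ)*Real.sqrt 721^0 + (519841 : ℝ)*Real.sqrt 721^2 + (721 : ℝ)*Real.sqrt 721^4 + (1 : ℝ)*Real.sqrt 721^6) * hb
  have p7_9 : Real.sqrt 721^9 = (270234665281 : ℝ)*Real.sqrt 721 := by linear_combination ((374805361 : ℝ)*Real.sqrt 721^1 + (519841 : ℝ)*Real.sqrt 721^3 + (721 : ℝ)*Real.sqrt 721^5 + (1 : ℝ)*Real.sqrt 721^7) * hb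
  have p7_10 : Real.sqrt 721^10 = (194839193667601 : ℝ) := by linear_combination ((270234665281 : ℝ)*Real.sqrt 721^0 + (374805361 : ℝ)*Real.sqrt 721^2 + (519841 : ℝ)*Real.sqrt 721^4 + (721 : ℝ)*Real.sqrt 721^6 + (1 : ℝ)*Real.sqrt 721^8) * hb
  have p7_11 : Real.sqrt 721^11 = (194839193667601 : ℝ)*Real.sqrt 721 := by linear_combination ((270234665281 : ℝ)*Real.sqrt 721^1 + (374805361 : ℝ)*Real.sqrt 721^3 + (519841 : ℝ)*Real.sqrt 721^5 + (721 : ℝ)*Real.sqrt 721^7 + (1 : ℝ)*Real.sqrt 721^9) * hb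
  have p7_12 : Real.sqrt 721^12 = (140479058634340321 : ℝ) := by linear_combination ((194839193667601 : ℝ)*Real.sqrt 721^0 + (270234665281 : ℝ)*Real.sqrt 721^2 + (374805361 : ℝ)*Real.sqrt 721^4 + (519841 : ℝ)*Real.sqrt 721^6 + (721 : ℝ)*Real.sqrt 721^8 + (1 : ℝ)*Real.sqrt 721^10) * hb
  have p7_13 : Real.sqrt 721^13 = (140479058634340321 : ℝ)*Real.sqrt 721 := by linear_combination ((194839193667601 : ℝ)*Real.sqrt 721^1 + (270234665281 : ℝ)*Real.sqrt 721^3 + (374805361 : ℝ)*Real.sqrt 721^5 + (519841 : ℝ)*Real.sqrt 721^7 + (721 : ℝ)*Real.sqrt 721^9 + (1 : ℝ)*Real.sqrt 721^11) * hb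
  have p7_14 : Real.sqrt 721^14 = (101285401275359371441 : ℝ) := by linear_combination ((140479058634340321 : ℝ)*Real.sqrt 721^0 + (194839193667601 : ℝ)*Real.sqrt 721^2 + (270234665281 : ℝ)*Real.sqrt 721^4 + (374805361 : ℝ)*Real.sqrt 721^6 + (519841 : ℝ)*Real.sqrt 721^8 + (721 : ℝ)*Real.sqrt 721^10 + (1 : ℝ)*Real.sqrt 721^12) * hb
  have p7_15 : Real.sqrt 721^15 = (101285401275359371441 : ℝ)*Real.sqrt 721 := by linear_combination ((140479058634340321 : ℝ)*Real.sqrt 721^1 + (194839193667601 : ℝ)*Real.sqrt 721^3 + (270234665281 : ℝ)*Real.sqrt 721^5 + (374805361 : ℝ)*Real.sqrt 721^7 + (519841 : ℝ)*Real.sqrt 721^9 + (721 : ℝ)*Real.sqrt 721^11 + (1 : ℝ)*Real.sqrt 721^13) * hb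
  have p7_16 : Real.sqrt 721^16 = (73026774319534106808961 : ℝ) := by linear_combination ((101285401275359371441 : ℝ)*Real.sqrt 721^0 + (140479058634340321 : ℝ)*Real.sqrt 721^2 + (194839193667601 : ℝ)*Real.sqrt 721^4 + (270234665281 : ℝ)*Real.sqrt 721^6 + (374805361 : ℝ)*Real.sqrt 721^8 + (519841 : ℝ)*Real.sqrt 721^10 + (721 : ℝ)*Real.sqrt 721^12 + (1 : ℝ)*Real.sqrt 721^14) * hb
  have hJ11 : HasDerivAt (fun x => FX γs x Y0) ((5293 - 197*Real.sqrt 721)/216) X0 := by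
    unfold FX Tpl
    refine HasDerivAt.congr_deriv
      (((hTX.sub_const (2/3)).mul (hasDerivAt_id' X0)).sub_const (2*Real.sqrt 6/3*Y0)) ?_
    beta_reduce
    rw [hden, hγ, hX0, hY0]
    have h13 : (13/18 + Real.sqrt 721/126 : ℝ) ≠ 0 := by positivity
    norm_num [pow_one]
    field_simp
    ring_nf
    simp only [p6_3, p7_3, p6_4, p7_4, p6_5, p7_5, p6_6, p7_6, p6_7, p7_7, p6_8, p7_8, p6_9, p7_9, p6_10, p7_10, p6_11, p7_11, p6_12, p7_12, p6_13, p7_13, p6_14, p7_14, p6_15, p7_15, p6_16, p7_16, ha, hb]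
    ring_nf
    have hq : (407586816 + Real.sqrt 721 * 4478976 : ℝ) ≠ 0 := by positivity
    field_simp
    ring_nf
    simp only [p6_3, p7_3, p6_4, p7_4, p6_5, p7_5, p6_6, p7_6, p6_7, p7_7, p6_8, p7_8, p6_9, p7_9, p6_10, p7_10, p6_11, p7_11, p6_12, p7_12, p6_13, p7_13, p6_14, p7_14, p6_15, p7_15, p6_16, p7_16, ha, hb]
    ring_nf
  have hJ12 : HasDerivAt (fun y => FX γs X0 y) (Real.sqrt 6*(143 - 7*Real.sqrt 721)/72) Y0 := by
    unfold FX Tpl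
    refine HasDerivAt.congr_deriv
      (((hTY.sub_const (2/3)).mul_const X0).sub ((hasDerivAt_id' Y0).const_mul (2*Real.sqrt 6/3))) ?_
    beta_reduce
    rw [hden, hγ, hX0, hY0]
    have h13 : (13/18 + Real.sqrt 721/126 : ℝ) ≠ 0 := by positivity
    norm_num [pow_one]
    field_simp
    ring_nf
    simp only [p6_3, p7_3, p6_4, p7_4, p6_5, p7_5, p6_6, p7_6, p6_7, p7_7, p6_8, p7_8, p6_9, p7_9, p6_10, p7_10, p6_11, p7_11, p6_12, p7_12, p6_13, p7_13, p6_14, p7_14, p6_15, p7_15, p6_16, p7_16, ha, hb]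
    ring_nf
  have hJ21 : HasDerivAt (fun x => FY γs x Y0) (Real.sqrt 6*(-164423 + 6127*Real.sqrt 721)/3888) X0 := by
    unfold FY Tpl
    refine HasDerivAt.congr_deriv
      (((hTX.add ((hasDerivAt_id' X0).const_mul (2*Real.sqrt 6/3))).const_mul 2).mul_const Y0) ?_
    beta_reduce
    rw [hden, hγ, hX0, hY0]
    have h13 : (13/18 + Real.sqrt 721/126 : ℝ) ≠ 0 := by positivity
    norm_num [pow_one]
    field_simp
    ring_nf
    simp only [p6_3, p7_3, p6_4, p7_4, p6_5, p7_5, p6_6, p7_6, p6_7, p7_7, p6_8, p7_8, p6_9, p7_9, p6_10, p7_10, p6_11, p7_11, p6_12, p7_12, p6_13, p7_13, p6_14, p7_14, p6_15, p7_15, p6_16, p7_16, ha, hb]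
    ring_nf
  have hJ22 : HasDerivAt (fun y => FY γs X0 y) ((-5293 + 197*Real.sqrt 721)/216) Y0 := by
    unfold FY Tpl
    refine HasDerivAt.congr_deriv
      (((hTY.add_const (2*Real.sqrt 6/3*X0)).const_mul 2).mul (hasDerivAt_id' Y0)) ?_
    beta_reduce
    rw [hden, hγ, hX0, hY0]
    have h13 : (13/18 + Real.sqrt 721/126 : ℝ) ≠ 0 := by positivity
    norm_num [pow_one]
    field_simp
    ring_nf
    simp only [p6_3, p7_3, p6_4, p7_4, p6_5, p7_5, p6_6, p7_6, p6_7, p7_7, p6_8, p7_8, p6_9, p7_9, p6_10, p7_10, p6_11, p7_11, p6_12, p7_12, p6_13, p7_13, p6_14, p7_14, p6_15, p7_15, p6_16, p7_16, ha, hb]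
    ring_nf
    have hq : (407586816 + Real.sqrt 721 * 4478976 : ℝ) ≠ 0 := by positivity
    field_simp
    ring_nf
    simp only [p6_3, p7_3, p6_4, p7_4, p6_5, p7_5, p6_6, p7_6, p6_7, p7_7, p6_8, p7_8, p6_9, p7_9, p6_10, p7_10, p6_11, p7_11, p6_12, p7_12, p6_13, p7_13, p6_14, p7_14, p6_15, p7_15, p6_16, p7_16, ha, hb]
    ring_nf
  have e1 : J11 = (5293 - 197*Real.sqrt 721)/216 := hJ11.deriv
  have e2 : J12 = Real.sqrt 6*(143 - 7*Real.sqrt 721)/72 := hJ12.deriv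
  have e3 : J21 = Real.sqrt 6*(-164423 + 6127*Real.sqrt 721)/3888 := hJ21.deriv
  have e4 : J22 = (-5293 + 197*Real.sqrt 721)/216 := hJ22.deriv
  have htr : J11 + J22 = 0 := by rw [e1, e4]; ring
  have hdet : J11*J22 - J12*J21 = (45*Real.sqrt 721 - 1205)/36 := by
    rw [e1, e2, e3, e4]
    linear_combination ((23512489/279936 : ℝ) + (-1013561/139968 : ℝ)*Real.sqrt 721 + (42889/279936 : ℝ)*Real.sqrt 721^2) * ha + ((85/972 : ℝ)) * hb
  have hdpos : 0 < (45*Real.sqrt 721 - 1205)/36 := by nlinarith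
  have hJ12ne : J12 ≠ 0 := by
    rw [e2]
    have h7 : 143 - 7*Real.sqrt 721 < 0 := by nlinarith
    have : Real.sqrt 6*(143 - 7*Real.sqrt 721) < 0 := mul_neg_of_pos_of_neg ha0 h7
    intro h
    rw [div_eq_zero_iff] at h
    rcases h with h | h
    · exact absurd h (ne_of_lt this)
    · norm_num at h
  have hμ2 : μ^2 = -((((45*Real.sqrt 721 - 1205)/36 : ℝ)) : ℂ) := by
    have hs : Real.sqrt (45*Real.sqrt 721 - 1205)^2 = 45*Real.sqrt 721 - 1205 :=
      Real.sq_sqrt (by nlinarith)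
    show (Complex.I/6 * _)^2 = _
    rw [mul_pow, div_pow, Complex.I_sq]
    rw [show ((Real.sqrt (45*Real.sqrt 721 - 1205) : ℝ) : ℂ)^2
        = (((Real.sqrt (45*Real.sqrt 721 - 1205)^2 : ℝ)) : ℂ) by push_cast; ring]
    rw [hs]
    push_cast
    ring
  have htrC : (J11 : ℂ) + (J22 : ℂ) = 0 := by exact_mod_cast htr
  have hdetC : (J11 : ℂ)*(J22 : ℂ) - (J12 : ℂ)*(J21 : ℂ) = (((45*Real.sqrt 721 - 1205)/36 : ℝ) : ℂ) := by
    exact_mod_cast hdet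
  have hJ12neC : (J12 : ℂ) ≠ 0 := by exact_mod_cast hJ12ne
  refine ⟨htr, hdet, hdpos, ?_, ?_⟩
  · refine ⟨![(J12 : ℂ), μ - (J11 : ℂ)], ?_, ?_⟩
    · intro h
      exact hJ12neC (by simpa using congrFun h 0)
    · funext i
      fin_cases i <;>
        simp only [Fin.mk_zero, Fin.mk_one, Fin.isValue, Matrix.of_apply,
          Matrix.mulVec, dotProduct, Fin.sum_univ_two, Matrix.cons_val',
          Matrix.cons_val_zero, Matrix.cons_val_one, Matrix.head_cons, Matrix.empty_val',
          Matrix.cons_val_fin_one, Matrix.head_fin_const, Pi.smul_apply, smul_eq_mul,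
          Matrix.cons_mulVec, Matrix.cons_dotProduct, Matrix.dotProduct_of_isEmpty, Matrix.tail_cons]
      · ring
      · linear_combination (-1 : ℂ) * hμ2 - hdetC + μ * htrC
  · refine ⟨![(J12 : ℂ), -μ - (J11 : ℂ)], ?_, ?_⟩
    · intro h
      exact hJ12neC (by simpa using congrFun h 0)
    · funext i
      fin_cases i <;>
        simp only [Fin.mk_zero, Fin.mk_one, Fin.isValue, Matrix.of_apply,
          Matrix.mulVec, dotProduct, Fin.sum_univ_two, Matrix.cons_val',
          Matrix.cons_val_zero, Matrix.cons_val_one, Matrix.head_cons, Matrix.empty_val',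
          Matrix.cons_val_fin_one, Matrix.head_fin_const, Pi.smul_apply, smul_eq_mul,
          Matrix.cons_mulVec, Matrix.cons_dotProduct, Matrix.dotProduct_of_isEmpty, Matrix.tail_cons]
      · ring
      · linear_combination (-1 : ℂ) * hμ2 - hdetC + (-μ) * htrC

end CFTilt
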